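/- Let r > 3 and μ, β > 0. The operator G(u) = μAu + B(u) + βC(u) satisfies ⟨G(u₁)-G(u₂), u₁-u₂⟩ + η₂‖u₁-u₂‖_{L²}² ≥ 0 for all u₁, u₂ ∈ V ∩ L^{r+1}, where η₂ = [(r-3)/(2μ(r-1))] (2/(βμ(r-1)))^{2/(r-3)}. -/

import Mathlib

open MeasureTheory Real
noncomputable section

/-- Euclidean 3-space, used both as the periodic box parametrization and target. -/
abbrev E3 := EuclideanSpace ℝ (Fin 3)

/-- The fundamental domain `[0,L]³` of the torus `T³`. -/
def box (L : ℝ) : Set E3 := {x | ∀ i, x i ∈ Set.Icc (0 : ℝ) L}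

/-- The standard basis vector `e_i`. -/
def e3 (i : Fin 3) : E3 := EuclideanSpace.single i 1

/-- `u` is `L`-periodic in each coordinate direction. -/
def Periodic3 (L : ℝ) {α : Type*} (u : E3 → α) : Prop :=
  ∀ (x : E3) (i : Fin 3), u (x + L • e3 i) = u x

/-- `|∇u|² = Σ_{i,j} (∂u_j/∂x_i)²`. -/
def gradNormSq (u : E3 → E3) (x : E3) : ℝ :=
  ∑ i, ∑ j, (fderiv ℝ u x (e3 i) j) ^ 2

/-- `|∇f|²` for a scalar function. -/
def gradNormSqScalar (f : E3 → ℝ) (x : E3) : ℝ :=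
  ∑ i, (fderiv ℝ f x (e3 i)) ^ 2

/-- `u` is divergence free. -/
def divFree (u : E3 → E3) : Prop := ∀ x, ∑ i, fderiv ℝ u x (e3 i) i = 0

/-- The Laplacian `Δu`. -/
def lap (u : E3 → E3) (x : E3) : E3 :=
  ∑ i, fderiv ℝ (fun y => fderiv ℝ u y (e3 i)) x (e3 i)

/-- The Navier–Stokes trilinear form `b(u,v,w) = ∫ (u·∇)v·w`. -/
def triB (L : ℝ) (u v w : E3 → E3) : ℝ :=
  ∫ x in box L, ∑ i, ∑ j, u x i * fderiv ℝ v x (e3 i) j * w x j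

/-- The `L^p` norm over the fundamental domain (for a real exponent `p`). -/
def LpNorm (L p : ℝ) (u : E3 → E3) : ℝ := (∫ x in box L, ‖u x‖ ^ p) ^ (1 / p)

/-- The square of the `V`-norm, `‖u‖_V² = ∫ |∇u|²`. -/
def VnormSq (L : ℝ) (u : E3 → E3) : ℝ := ∫ x in box L, gradNormSq u x

/-- The `V`-norm `‖u‖_V = ‖∇u‖_{L²}`. -/
def Vnorm (L : ℝ) (u : E3 → E3) : ℝ := Real.sqrt (VnormSq L u)

/-! ### Auxiliary lemmas for `stmt10` -/

section StmtTenAux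

lemma stmt10_box_isClosed (L : ℝ) : IsClosed (box L) := by
  have h : box L = ⋂ i, (⇑(EuclideanSpace.proj (𝕜 := ℝ) i) ⁻¹' Set.Icc (0:ℝ) L) := by
    ext x; simp [box]
  rw [h]
  exact isClosed_iInter fun i => isClosed_Icc.preimage (EuclideanSpace.proj i).continuous

lemma stmt10_box_isCompact (L : ℝ) : IsCompact (box L) := by
  apply Metric.isCompact_of_isClosed_isBounded (stmt10_box_isClosed L)
  rw [Metric.isBounded_iff_subset_closedBall 0]
  refine ⟨Real.sqrt (3 * L^2), fun x hx => ?_⟩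
  simp only [Metric.mem_closedBall, dist_zero_right]
  rw [EuclideanSpace.norm_eq]
  apply Real.sqrt_le_sqrt
  have h : ∀ i : Fin 3, ‖x i‖^2 ≤ L^2 := by
    intro i
    obtain ⟨h1, h2⟩ := hx i
    rw [Real.norm_eq_abs, sq_abs]
    nlinarith
  calc ∑ i, ‖x i‖^2 ≤ ∑ _i : Fin 3, L^2 := Finset.sum_le_sum fun i _ => h i
    _ = 3 * L^2 := by simp [Finset.sum_const]

lemma stmt10_normsq (a : E3) : ‖a‖ ^ 2 = ∑ j, a j ^ 2 := by
  rw [EuclideanSpace.norm_eq, Real.sq_sqrt (by positivity)]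
  simp [sq_abs]

/-- Scalar Young-type inequality giving the constant `η₂`. -/
lemma stmt10_lemC (r μ β : ℝ) (hr : 3 < r) (hμ : 0 < μ) (hβ : 0 < β) (s : ℝ) (hs : 0 ≤ s) :
    s ^ 2 / (2 * μ) ≤ β / 2 * s ^ (r - 1)
      + (r - 3) / (2 * μ * (r - 1)) * (2 / (β * μ * (r - 1))) ^ (2 / (r - 3)) := by
  have hr1 : (0:ℝ) < r - 1 := by linarith
  have hr3 : (0:ℝ) < r - 3 := by linarith
  set ε : ℝ := (β * (r - 1) / 4) ^ (2 / (r - 1)) with hε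
  have hbase : (0:ℝ) < β * (r - 1) / 4 := by positivity
  have hεpos : 0 < ε := Real.rpow_pos_of_pos hbase _
  have h2μ : (0:ℝ) < 2 * μ := by positivity
  have hpq : ((r-1)/2).HolderConjugate ((r-1)/(r-3)) := by
    constructor
    · rw [inv_one, inv_div, inv_div]
      field_simp
      ring
    · exact div_pos hr1 two_pos
    · exact div_pos hr1 hr3
  have hY := Real.young_inequality_of_nonneg
    (mul_nonneg hεpos.le (sq_nonneg s)) (le_of_lt (by positivity : (0:ℝ) < 1/(2*μ*ε))) hpq
  have hab : ε * s ^ 2 * (1 / (2 * μ * ε)) = s ^ 2 / (2 * μ) := by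
    field_simp
  have hA : (ε * s ^ 2) ^ ((r-1)/2) / ((r-1)/2) = β / 2 * s ^ (r - 1) := by
    rw [Real.mul_rpow hεpos.le (sq_nonneg s)]
    have h1 : ε ^ ((r-1)/2) = β * (r - 1) / 4 := by
      rw [hε, ← Real.rpow_mul hbase.le]
      rw [show 2 / (r-1) * ((r-1)/2) = (1:ℝ) by field_simp]
      exact Real.rpow_one _
    have h2 : (s ^ 2) ^ ((r-1)/2) = s ^ (r - 1) := by
      rw [← Real.rpow_natCast s 2, ← Real.rpow_mul hs]
      norm_num
      rw [show (2:ℝ) * ((r-1)/2) = r - 1 by ring]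
    rw [h1, h2]
    field_simp
    ring
  have hq : (2:ℝ)/(r-1) * ((r-1)/(r-3)) = 2/(r-3) := by field_simp
  have hεq : ε ^ ((r-1)/(r-3)) = (β*(r-1)/4) ^ (2/(r-3)) := by
    rw [hε, ← Real.rpow_mul hbase.le, hq]
  have hprod : (2*μ*ε) ^ ((r-1)/(r-3)) = 2*μ * (β*μ*(r-1)/2) ^ (2/(r-3)) := by
    rw [Real.mul_rpow h2μ.le hεpos.le, hεq]
    rw [show (r-1)/(r-3) = 1 + 2/(r-3) by field_simp; ring]
    rw [Real.rpow_add h2μ, Real.rpow_one, mul_assoc, ← Real.mul_rpow h2μ.le hbase.le]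
    congr 2
    ring
  have hB : (1/(2*μ*ε)) ^ ((r-1)/(r-3)) = 1/(2*μ) * (2/(β*μ*(r-1))) ^ (2/(r-3)) := by
    rw [one_div, Real.inv_rpow (by positivity), hprod, mul_inv,
      ← Real.inv_rpow (by positivity), inv_div, one_div]
  rw [hab, hA, hB] at hY
  have hfin : 1/(2*μ) * (2/(β*μ*(r-1))) ^ (2/(r-3)) / ((r-1)/(r-3))
      = (r-3)/(2*μ*(r-1)) * (2/(β*μ*(r-1))) ^ (2/(r-3)) := by
    field_simp
  rw [hfin] at hY
  exact hY

/-- Pointwise monotonicity of the damping nonlinearity. -/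
lemma stmt10_lemA (r : ℝ) (hr : 3 < r) (a b : E3) :
    (1/2) * ‖b‖ ^ (r-1) * ‖a - b‖ ^ 2
      ≤ ∑ j, (‖a‖ ^ (r - 1) * a j - ‖b‖ ^ (r - 1) * b j) * (a j - b j) := by
  have hS : (0:ℝ) ≤ ‖a‖ ^ (r-1) := Real.rpow_nonneg (norm_nonneg a) _
  have hs : (0:ℝ) ≤ ‖b‖ ^ (r-1) := Real.rpow_nonneg (norm_nonneg b) _
  have hab : ∀ j, (a - b) j = a j - b j := fun j => rfl
  have h1 : ‖a - b‖ ^ 2 = ‖a‖^2 + ‖b‖^2 - 2 * ∑ j, a j * b j := by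
    rw [stmt10_normsq (a-b), stmt10_normsq a, stmt10_normsq b]
    simp only [hab, Fin.sum_univ_three]
    ring
  have h2 : ∑ j, (‖a‖ ^ (r - 1) * a j - ‖b‖ ^ (r - 1) * b j) * (a j - b j)
      = ‖a‖ ^ (r-1) * (‖a‖^2 - ∑ j, a j * b j) + ‖b‖ ^ (r-1) * (‖b‖^2 - ∑ j, a j * b j) := by
    rw [stmt10_normsq a, stmt10_normsq b]
    simp only [Fin.sum_univ_three]
    ring
  have hmono : 0 ≤ (‖a‖ ^ (r-1) - ‖b‖ ^ (r-1)) * (‖a‖^2 - ‖b‖^2) := by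
    rcases le_total ‖a‖ ‖b‖ with h | h
    · have h1' := Real.rpow_le_rpow (norm_nonneg a) h (by linarith : (0:ℝ) ≤ r-1)
      have h2' := pow_le_pow_left₀ (norm_nonneg a) h 2
      nlinarith
    · have h1' := Real.rpow_le_rpow (norm_nonneg b) h (by linarith : (0:ℝ) ≤ r-1)
      have h2' := pow_le_pow_left₀ (norm_nonneg b) h 2
      nlinarith
  have h3 : (0:ℝ) ≤ ‖a‖ ^ (r-1) * ‖a - b‖^2 := mul_nonneg hS (sq_nonneg _)
  rw [h2, h1] at *
  nlinarith [hmono, h3]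

/-- Entrywise Young bound for the trilinear term. -/
lemma stmt10_lemB (μ : ℝ) (hμ : 0 < μ) (c b : E3) (D : E3 →L[ℝ] E3) :
    ∑ i, ∑ j, c i * D (e3 i) j * b j
      ≤ μ/2 * (∑ i, ∑ j, (D (e3 i) j) ^ 2) + 1/(2*μ) * (‖c‖^2 * ‖b‖^2) := by
  have key : ∀ x y z : ℝ, x * y * z ≤ μ/2 * y^2 + 1/(2*μ) * (x^2*z^2) := by
    intro x y z
    rw [← sub_nonneg]
    have h : μ/2 * y^2 + 1/(2*μ) * (x^2*z^2) - x*y*z = (μ*y - x*z)^2/(2*μ) := by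
      field_simp; ring
    rw [h]; positivity
  simp only [Fin.sum_univ_three, stmt10_normsq]
  nlinarith [key (c 0) (D (e3 0) 0) (b 0), key (c 0) (D (e3 0) 1) (b 1), key (c 0) (D (e3 0) 2) (b 2),
    key (c 1) (D (e3 1) 0) (b 0), key (c 1) (D (e3 1) 1) (b 1), key (c 1) (D (e3 1) 2) (b 2),
    key (c 2) (D (e3 2) 0) (b 0), key (c 2) (D (e3 2) 1) (b 1), key (c 2) (D (e3 2) 2) (b 2)]

/-- The pointwise inequality underlying `stmt10`. -/
lemma stmt10_key (r μ β : ℝ) (hr : 3 < r) (hμ : 0 < μ) (hβ : 0 < β)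
    (a b : E3) (D : E3 →L[ℝ] E3) :
    0 ≤ μ * (∑ i, ∑ j, (D (e3 i) j) ^ 2)
      - (∑ i, ∑ j, (a - b) i * D (e3 i) j * b j)
      + β * (∑ j, (‖a‖ ^ (r - 1) * a j - ‖b‖ ^ (r - 1) * b j) * (a j - b j))
      + (r - 3) / (2 * μ * (r - 1)) * (2 / (β * μ * (r - 1))) ^ (2 / (r - 3)) * ‖a - b‖ ^ 2 := by
  have hB := stmt10_lemB μ hμ (a - b) b D
  have hA := stmt10_lemA r hr a b
  have hC := stmt10_lemC r μ β hr hμ hβ ‖b‖ (norm_nonneg b)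
  have hC2 := mul_le_mul_of_nonneg_right hC (sq_nonneg ‖a - b‖)
  have hA2 := mul_le_mul_of_nonneg_left hA hβ.le
  have hG : (0:ℝ) ≤ ∑ i, ∑ j, (D (e3 i) j) ^ 2 :=
    Finset.sum_nonneg fun i _ => Finset.sum_nonneg fun j _ => sq_nonneg _
  have hre : ‖b‖^2/(2*μ) * ‖a - b‖^2 = 1/(2*μ) * (‖a - b‖^2 * ‖b‖^2) := by ring
  rw [hre] at hC2
  linarith [hB, hA2, hC2, mul_nonneg hμ.le hG]

end StmtTenAux
/-- Monotonicity of `G(u) = μAu + B(u) + βC(u)` for `r > 3`: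
`⟨G(u₁)-G(u₂), u₁-u₂⟩ + η₂‖u₁-u₂‖_{L²}² ≥ 0` where
`η₂ = [(r-3)/(2μ(r-1))](2/(βμ(r-1)))^{2/(r-3)}`.  The pairing is expressed via
`⟨A(u₁-u₂),u₁-u₂⟩ = ‖u₁-u₂‖_V²`, `⟨B(u₁)-B(u₂),u₁-u₂⟩ = -b(u₁-u₂,u₁-u₂,u₂)`
and the concrete `L^{(r+1)/r}`–`L^{r+1}` pairing for `C`. -/
theorem stmt10 (L r μ β : ℝ) (hL : 0 < L) (hr : 3 < r) (hμ : 0 < μ) (hβ : 0 < β)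
    (u₁ u₂ : E3 → E3)
    (h1 : ContDiff ℝ (⊤ : ℕ∞) u₁) (h2 : ContDiff ℝ (⊤ : ℕ∞) u₂)
    (h1p : Periodic3 L u₁) (h2p : Periodic3 L u₂)
    (h1d : divFree u₁) (h2d : divFree u₂) :
    0 ≤ μ * VnormSq L (u₁ - u₂)
        - triB L (u₁ - u₂) (u₁ - u₂) u₂
        + β * (∫ x in box L, ∑ j,
            (‖u₁ x‖ ^ (r - 1) * u₁ x j - ‖u₂ x‖ ^ (r - 1) * u₂ x j)
              * (u₁ x j - u₂ x j))
        + ((r - 3) / (2 * μ * (r - 1))) * (2 / (β * μ * (r - 1))) ^ (2 / (r - 3))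
          * ∫ x in box L, ‖u₁ x - u₂ x‖ ^ 2 := by
  have hw : ContDiff ℝ (⊤ : ℕ∞) (u₁ - u₂) := h1.sub h2
  have hcomp := stmt10_box_isCompact L
  have hmeas : MeasurableSet (box L) := (stmt10_box_isClosed L).measurableSet
  have hD : Continuous (fderiv ℝ (u₁ - u₂)) := hw.continuous_fderiv (by simp)
  have hDij : ∀ i j : Fin 3, Continuous fun x => fderiv ℝ (u₁ - u₂) x (e3 i) j := fun i j =>
    (EuclideanSpace.proj j).continuous.comp (hD.clm_apply continuous_const)
  have hc1 : Continuous u₁ := h1.continuous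
  have hc2 : Continuous u₂ := h2.continuous
  have hcw : Continuous (u₁ - u₂) := hc1.sub hc2
  have hInt : ∀ f : E3 → ℝ, Continuous f → IntegrableOn f (box L) :=
    fun f hf => hf.continuousOn.integrableOn_compact hcomp
  have hi1 : IntegrableOn (fun x => gradNormSq (u₁ - u₂) x) (box L) := by
    apply hInt
    unfold gradNormSq
    exact continuous_finset_sum _ fun i _ =>
      continuous_finset_sum _ fun j _ => (hDij i j).pow 2
  have hi2 : IntegrableOn
      (fun x => ∑ i, ∑ j, (u₁ - u₂) x i * fderiv ℝ (u₁ - u₂) x (e3 i) j * u₂ x j) (box L) := by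
    apply hInt
    refine continuous_finset_sum _ fun i _ => continuous_finset_sum _ fun j _ => ?_
    exact (((EuclideanSpace.proj i).continuous.comp hcw).mul (hDij i j)).mul
      ((EuclideanSpace.proj j).continuous.comp hc2)
  have hi3 : IntegrableOn (fun x => ∑ j,
      (‖u₁ x‖ ^ (r - 1) * u₁ x j - ‖u₂ x‖ ^ (r - 1) * u₂ x j) * (u₁ x j - u₂ x j)) (box L) := by
    apply hInt
    refine continuous_finset_sum _ fun j _ => ?_
    have hn1 : Continuous fun x => ‖u₁ x‖ ^ (r-1) :=
      hc1.norm.rpow_const (fun x => Or.inr (by linarith))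
    have hn2 : Continuous fun x => ‖u₂ x‖ ^ (r-1) :=
      hc2.norm.rpow_const (fun x => Or.inr (by linarith))
    exact ((hn1.mul ((EuclideanSpace.proj j).continuous.comp hc1)).sub
        (hn2.mul ((EuclideanSpace.proj j).continuous.comp hc2))).mul
      (((EuclideanSpace.proj j).continuous.comp hc1).sub
        ((EuclideanSpace.proj j).continuous.comp hc2))
  have hi4 : IntegrableOn (fun x => ‖u₁ x - u₂ x‖ ^ 2) (box L) :=
    hInt _ ((hc1.sub hc2).norm.pow 2)
  have hpt : ∀ x ∈ box L, 0 ≤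
      μ * gradNormSq (u₁ - u₂) x
      - (∑ i, ∑ j, (u₁ - u₂) x i * fderiv ℝ (u₁ - u₂) x (e3 i) j * u₂ x j)
      + β * (∑ j, (‖u₁ x‖ ^ (r - 1) * u₁ x j - ‖u₂ x‖ ^ (r - 1) * u₂ x j) * (u₁ x j - u₂ x j))
      + ((r - 3) / (2 * μ * (r - 1))) * (2 / (β * μ * (r - 1))) ^ (2 / (r - 3))
          * ‖u₁ x - u₂ x‖ ^ 2 := by
    intro x _
    exact stmt10_key r μ β hr hμ hβ (u₁ x) (u₂ x) (fderiv ℝ (u₁ - u₂) x)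
  have key0 : 0 ≤ ∫ x in box L,
      (μ * gradNormSq (u₁ - u₂) x
      - (∑ i, ∑ j, (u₁ - u₂) x i * fderiv ℝ (u₁ - u₂) x (e3 i) j * u₂ x j)
      + β * (∑ j, (‖u₁ x‖ ^ (r - 1) * u₁ x j - ‖u₂ x‖ ^ (r - 1) * u₂ x j) * (u₁ x j - u₂ x j))
      + ((r - 3) / (2 * μ * (r - 1))) * (2 / (β * μ * (r - 1))) ^ (2 / (r - 3))
          * ‖u₁ x - u₂ x‖ ^ 2) :=
    setIntegral_nonneg hmeas hpt
  have j1 : Integrable (fun x => μ * gradNormSq (u₁ - u₂) x) (volume.restrict (box L)) :=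
    hi1.const_mul μ
  have j2 : Integrable (fun x => μ * gradNormSq (u₁ - u₂) x
      - ∑ i, ∑ j, (u₁ - u₂) x i * fderiv ℝ (u₁ - u₂) x (e3 i) j * u₂ x j)
      (volume.restrict (box L)) := by exact j1.sub hi2
  have j3 : Integrable (fun x => β * ∑ j,
      (‖u₁ x‖ ^ (r - 1) * u₁ x j - ‖u₂ x‖ ^ (r - 1) * u₂ x j) * (u₁ x j - u₂ x j))
      (volume.restrict (box L)) := hi3.const_mul β
  have j23 : Integrable (fun x => μ * gradNormSq (u₁ - u₂) x
      - ∑ i, ∑ j, (u₁ - u₂) x i * fderiv ℝ (u₁ - u₂) x (e3 i) j * u₂ x j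
      + β * ∑ j, (‖u₁ x‖ ^ (r - 1) * u₁ x j - ‖u₂ x‖ ^ (r - 1) * u₂ x j) * (u₁ x j - u₂ x j))
      (volume.restrict (box L)) := by exact j2.add j3
  have j4 : Integrable (fun x => ((r - 3) / (2 * μ * (r - 1)))
      * (2 / (β * μ * (r - 1))) ^ (2 / (r - 3)) * ‖u₁ x - u₂ x‖ ^ 2)
      (volume.restrict (box L)) := hi4.const_mul _
  rw [integral_add j23 j4, integral_add j2 j3, integral_sub j1 hi2,
      integral_const_mul, integral_const_mul, integral_const_mul] at key0
  exact key0
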